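/- Consider the planar vector field f : ℝ² → ℝ² given by f(x₁,x₂) = (x₁(−(α₁+d₂)x₁² − (α₁+α₂+d₁+d₂)x₂² + (α₁+d₂)), x₂((α₂+α₃+d₁+d₃)x₁² + (α₃+d₃)x₂² − (α₃+d₃))) (the restriction of the Kolmogorov system to the invariant sphere octant S²₊). Define, on the region U = {(x₁,x₂) : x₁ > 0, x₂ > 0, x₁² + x₂² < 1}, the function H(x₁,x₂) = x₁^{2(α₃+d₃)} · x₂^{2(α₁+d₂)} · (1 − x₁² − x₂²)^{α₂+d₁} (real powers). Then H is a first integral of f on U: for every differentiable y : ℝ → ℝ² with y'(t) = f(y(t)) and y(t) ∈ U for all t, the function t ↦ H(y(t)) is constant. -/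

import Mathlib

/-- The restriction of the Kolmogorov system to the invariant sphere octant `S²₊`,
viewed as a planar vector field. -/
noncomputable def fRed (α₁ α₂ α₃ d₁ d₂ d₃ : ℝ) (p : ℝ × ℝ) : ℝ × ℝ :=
  (p.1 * (-(α₁ + d₂) * p.1 ^ 2 - (α₁ + α₂ + d₁ + d₂) * p.2 ^ 2 + (α₁ + d₂)),
   p.2 * ((α₂ + α₃ + d₁ + d₃) * p.1 ^ 2 + (α₃ + d₃) * p.2 ^ 2 - (α₃ + d₃)))

/-- `H(x₁,x₂) = x₁^{2(α₃+d₃)} · x₂^{2(α₁+d₂)} · (1 − x₁² − x₂²)^{α₂+d₁}` (real powers). -/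
noncomputable def Hfun (α₁ α₂ α₃ d₁ d₂ d₃ : ℝ) (p : ℝ × ℝ) : ℝ :=
  p.1 ^ (2 * (α₃ + d₃)) * p.2 ^ (2 * (α₁ + d₂)) * (1 - p.1 ^ 2 - p.2 ^ 2) ^ (α₂ + d₁)

/-- `H` is a first integral of the reduced planar system on
`U = {(x₁,x₂) : x₁ > 0, x₂ > 0, x₁² + x₂² < 1}`: it is constant along every solution
staying in `U`. -/
theorem Hfun_first_integral (α₁ α₂ α₃ d₁ d₂ d₃ : ℝ) (y : ℝ → ℝ × ℝ)
    (hy : ∀ t : ℝ, HasDerivAt y (fRed α₁ α₂ α₃ d₁ d₂ d₃ (y t)) t)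
    (hU : ∀ t : ℝ, 0 < (y t).1 ∧ 0 < (y t).2 ∧ (y t).1 ^ 2 + (y t).2 ^ 2 < 1) :
    ∀ s t : ℝ, Hfun α₁ α₂ α₃ d₁ d₂ d₃ (y s) = Hfun α₁ α₂ α₃ d₁ d₂ d₃ (y t) := by
  have key : ∀ t : ℝ, HasDerivAt (fun t => Hfun α₁ α₂ α₃ d₁ d₂ d₃ (y t)) 0 t := by
    intro t
    obtain ⟨hx, hz, hs⟩ := hU t
    set x : ℝ := (y t).1 with hxdef
    set z : ℝ := (y t).2 with hzdef
    have hw : (0:ℝ) < 1 - x ^ 2 - z ^ 2 := by linarith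
    set P : ℝ := -(α₁ + d₂) * x ^ 2 - (α₁ + α₂ + d₁ + d₂) * z ^ 2 + (α₁ + d₂) with hP
    set Q : ℝ := (α₂ + α₃ + d₁ + d₃) * x ^ 2 + (α₃ + d₃) * z ^ 2 - (α₃ + d₃) with hQ
    have hx1 : HasDerivAt (fun t => (y t).1) (x * P) t := by
      have := ((ContinuousLinearMap.fst ℝ ℝ ℝ).hasFDerivAt.comp t
        (hy t).hasFDerivAt).hasDerivAt
      simp [fRed, hP, ← hxdef, ← hzdef] at this
      exact this.congr_deriv (by rw [hP]; ring)
    have hz1 : HasDerivAt (fun t => (y t).2) (z * Q) t := by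
      have := ((ContinuousLinearMap.snd ℝ ℝ ℝ).hasFDerivAt.comp t
        (hy t).hasFDerivAt).hasDerivAt
      simp [fRed, hQ, ← hxdef, ← hzdef] at this
      exact this.congr_deriv (by rw [hQ])
    have hw1 : HasDerivAt (fun t => 1 - (y t).1 ^ 2 - (y t).2 ^ 2)
        (0 - (2 * x ^ 1 * (x * P)) - (2 * z ^ 1 * (z * Q))) t :=
      ((hasDerivAt_const t (1:ℝ)).sub (hx1.pow 2)).sub (hz1.pow 2)
    have h1 : HasDerivAt (fun t => (y t).1 ^ (2 * (α₃ + d₃)))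
        ((x * P) * (2 * (α₃ + d₃)) * x ^ (2 * (α₃ + d₃) - 1)) t :=
      hx1.rpow_const (Or.inl hx.ne')
    have h2 : HasDerivAt (fun t => (y t).2 ^ (2 * (α₁ + d₂)))
        ((z * Q) * (2 * (α₁ + d₂)) * z ^ (2 * (α₁ + d₂) - 1)) t :=
      hz1.rpow_const (Or.inl hz.ne')
    have h3 : HasDerivAt (fun t => (1 - (y t).1 ^ 2 - (y t).2 ^ 2) ^ (α₂ + d₁))
        ((0 - (2 * x ^ 1 * (x * P)) - (2 * z ^ 1 * (z * Q))) * (α₂ + d₁)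
          * (1 - x ^ 2 - z ^ 2) ^ (α₂ + d₁ - 1)) t :=
      hw1.rpow_const (Or.inl hw.ne')
    have hprod := (h1.mul h2).mul h3
    convert hprod using 1
    case e'_4 => rfl
    case e'_5 => rfl
    case e'_8 => rfl
    rw [Real.rpow_sub_one hx.ne', Real.rpow_sub_one hz.ne', Real.rpow_sub_one hw.ne']
    symm
    have hid : (1 - x ^ 2 - z ^ 2) * ((2 * (α₃ + d₃)) * P + (2 * (α₁ + d₂)) * Q)
        - 2 * (α₂ + d₁) * (x ^ 2 * P + z ^ 2 * Q) = 0 := by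
      rw [hP, hQ]; ring
    simp only [Pi.mul_apply, ← hxdef, ← hzdef]
    field_simp
    linear_combination (x ^ (2 * (α₃ + d₃)) * z ^ (2 * (α₁ + d₂))
      * (1 - x ^ 2 - z ^ 2) ^ (α₂ + d₁)) * hid
  have hdiff : Differentiable ℝ (fun t => Hfun α₁ α₂ α₃ d₁ d₂ d₃ (y t)) :=
    fun t => (key t).differentiableAt
  intro s t
  exact is_const_of_deriv_eq_zero hdiff (fun u => (key u).deriv) s t
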